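/- Let φ be an N-function such that φ and φ* satisfy the Δ₂-condition. Then uniformly for all P₀, P₁ ∈ ℝ^{N×n} with |P₀| + |P₁| > 0, ∫₀¹ φ'(|P_θ|)/|P_θ| dθ ∼ φ'(|P₀| + |P₁|)/(|P₀| + |P₁|), where P_θ := (1−θ)P₀ + θP₁ and the implicit constants depend only on the Δ₂-constants of φ and φ*. -/

import Mathlib

open Set Filter MeasureTheory

def IsNFunction (ψ ψ' : ℝ → ℝ) : Prop :=
  ψ 0 = 0 ∧
  (∀ t ∈ Set.Ici (0:ℝ), HasDerivWithinAt ψ (ψ' t) (Set.Ici 0) t) ∧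
  MonotoneOn ψ' (Set.Ici 0) ∧
  (∀ t ∈ Set.Ici (0:ℝ), ContinuousWithinAt ψ' (Set.Ici t) t) ∧
  ψ' 0 = 0 ∧
  (∀ t > (0:ℝ), 0 < ψ' t) ∧
  Filter.Tendsto ψ' Filter.atTop Filter.atTop

noncomputable def conjFn (ψ : ℝ → ℝ) (t : ℝ) : ℝ :=
  sSup {y | ∃ s ≥ (0:ℝ), y = s * t - ψ s}

section Aux

variable {φ φ' : ℝ → ℝ}

lemma nf_contOn (h : IsNFunction φ φ') : ContinuousOn φ (Set.Ici 0) :=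
  fun t ht => (h.2.1 t ht).continuousWithinAt

lemma nf_hasDerivAt (h : IsNFunction φ φ') {x : ℝ} (hx : 0 < x) : HasDerivAt φ (φ' x) x :=
  (h.2.1 x hx.le).hasDerivAt (Ici_mem_nhds hx)

lemma nf_phi'_nonneg (h : IsNFunction φ φ') {t : ℝ} (ht : 0 ≤ t) : 0 ≤ φ' t := by
  have := h.2.2.1 (Set.self_mem_Ici) ht ht
  rw [h.2.2.2.2.1] at this
  exact this

lemma grad_upper (h : IsNFunction φ φ') {a b : ℝ} (ha : 0 ≤ a) (hab : a ≤ b) :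
    φ b - φ a ≤ φ' b * (b - a) := by
  have hb : (0:ℝ) ≤ b := ha.trans hab
  have hsub : Set.Icc a b ⊆ Set.Ici (0:ℝ) := fun x hx => ha.trans hx.1
  have hmono : MonotoneOn (fun x => φ' b * x - φ x) (Set.Icc a b) := by
    apply monotoneOn_of_deriv_nonneg (convex_Icc a b)
    · exact (continuousOn_const.mul continuousOn_id).sub ((nf_contOn h).mono hsub)
    · intro x hx
      rw [interior_Icc] at hx
      exact (((hasDerivAt_id' x).const_mul (φ' b)).sub
        (nf_hasDerivAt h (ha.trans_lt hx.1))).differentiableAt.differentiableWithinAt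
    · intro x hx
      rw [interior_Icc] at hx
      have hd := ((hasDerivAt_id' x).const_mul (φ' b)).sub (nf_hasDerivAt h (ha.trans_lt hx.1))
      rw [(show deriv (fun x => φ' b * x - φ x) x = φ' b * 1 - φ' x from hd.deriv), mul_one, sub_nonneg]
      exact h.2.2.1 (ha.trans hx.1.le : (0:ℝ) ≤ x) hb hx.2.le
  have := hmono ⟨le_refl a, hab⟩ ⟨hab, le_refl b⟩ hab
  simp only [] at this
  nlinarith

lemma grad_lower (h : IsNFunction φ φ') {a b : ℝ} (ha : 0 ≤ a) (hab : a ≤ b) :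
    φ' a * (b - a) ≤ φ b - φ a := by
  have hsub : Set.Icc a b ⊆ Set.Ici (0:ℝ) := fun x hx => ha.trans hx.1
  have hmono : MonotoneOn (fun x => φ x - φ' a * x) (Set.Icc a b) := by
    apply monotoneOn_of_deriv_nonneg (convex_Icc a b)
    · exact ((nf_contOn h).mono hsub).sub (continuousOn_const.mul continuousOn_id)
    · intro x hx
      rw [interior_Icc] at hx
      exact ((nf_hasDerivAt h (ha.trans_lt hx.1)).sub
        ((hasDerivAt_id' x).const_mul (φ' a))).differentiableAt.differentiableWithinAt
    · intro x hx
      rw [interior_Icc] at hx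
      have hd := (nf_hasDerivAt h (ha.trans_lt hx.1)).sub ((hasDerivAt_id' x).const_mul (φ' a))
      rw [(show deriv (fun x => φ x - φ' a * x) x = φ' x - φ' a * 1 from hd.deriv), mul_one, sub_nonneg]
      exact h.2.2.1 ha (ha.trans hx.1.le : (0:ℝ) ≤ x) hx.1.le
  have := hmono ⟨le_refl a, hab⟩ ⟨hab, le_refl b⟩ hab
  simp only [] at this
  nlinarith

lemma nf_phi_nonneg (h : IsNFunction φ φ') {t : ℝ} (ht : 0 ≤ t) : 0 ≤ φ t := by
  have := grad_lower h le_rfl ht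
  rw [h.1, h.2.2.2.2.1] at this
  linarith

lemma nf_le_mul (h : IsNFunction φ φ') {t : ℝ} (ht : 0 ≤ t) : φ t ≤ t * φ' t := by
  have := grad_upper h le_rfl ht
  rw [h.1] at this
  nlinarith

lemma nf_mul_le (h : IsNFunction φ φ') {t : ℝ} (ht : 0 ≤ t) : t * φ' t ≤ φ (2 * t) := by
  have h1 := grad_lower h ht (by linarith : t ≤ 2 * t)
  have h2 := nf_phi_nonneg h ht
  nlinarith

lemma conj_bddAbove (h : IsNFunction φ φ') {s : ℝ} (hs : 0 ≤ s) :
    BddAbove {y | ∃ u ≥ (0:ℝ), y = u * s - φ u} := by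
  obtain ⟨T, hT⟩ := (h.2.2.2.2.2.2.eventually_ge_atTop s).exists_forall_of_atTop
  refine ⟨s * (max T 0), ?_⟩
  rintro y ⟨u, hu, rfl⟩
  set T' := max T 0 with hT'
  have hT'0 : (0:ℝ) ≤ T' := le_max_right _ _
  rcases le_total u T' with huT | huT
  · have := nf_phi_nonneg h hu
    nlinarith
  · have h1 : φ' T' * (u - T') ≤ φ u - φ T' := grad_lower h hT'0 huT
    have h2 : s ≤ φ' T' := hT T' (le_max_left _ _)
    have h3 : 0 ≤ φ T' := nf_phi_nonneg h hT'0
    nlinarith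

lemma conj_ge (h : IsNFunction φ φ') {s u : ℝ} (hs : 0 ≤ s) (hu : 0 ≤ u) :
    u * s - φ u ≤ conjFn φ s :=
  le_csSup (conj_bddAbove h hs) ⟨u, hu, rfl⟩

lemma conj_young (h : IsNFunction φ φ') {t : ℝ} (ht : 0 ≤ t) :
    conjFn φ (φ' t) ≤ t * φ' t - φ t := by
  have hmem : (0:ℝ) * φ' t - φ 0 ∈ {y | ∃ s ≥ (0:ℝ), y = s * φ' t - φ s} := ⟨0, le_rfl, rfl⟩
  apply csSup_le ⟨_, hmem⟩
  rintro y ⟨u, hu, rfl⟩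
  rcases le_total t u with htu | htu
  · have := grad_lower h ht htu
    nlinarith
  · have := grad_upper h hu htu
    nlinarith

lemma conj_nonneg (h : IsNFunction φ φ') {s : ℝ} (hs : 0 ≤ s) : 0 ≤ conjFn φ s := by
  have := conj_ge h hs le_rfl
  rw [h.1] at this
  simpa using this

lemma phi'_growth {Ks : ℝ} (h : IsNFunction φ φ') (hKs : 0 < Ks)
    (hΔs : ∀ t ≥ (0:ℝ), conjFn φ (2 * t) ≤ Ks * conjFn φ t)
    {t : ℝ} (ht : 0 ≤ t) : (3/2) * φ' t ≤ φ' ((2 * Ks + 2) * t) := by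
  rcases ht.eq_or_lt with rfl | ht0
  · simp [h.2.2.2.2.1]
  set M0 := 2 * Ks + 2 with hM0
  have hM0pos : 0 < M0 := by positivity
  have hp' : 0 ≤ φ' t := nf_phi'_nonneg h ht
  have h2p' : (0:ℝ) ≤ 2 * φ' t := by linarith
  have h1 : (M0 * t) * (2 * φ' t) - φ (M0 * t) ≤ conjFn φ (2 * φ' t) :=
    conj_ge h h2p' (by positivity)
  have h2 : conjFn φ (2 * φ' t) ≤ Ks * conjFn φ (φ' t) := hΔs (φ' t) hp'
  have h3 : conjFn φ (φ' t) ≤ t * φ' t - φ t := conj_young h ht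
  have h4 : φ (M0 * t) ≤ (M0 * t) * φ' (M0 * t) := nf_le_mul h (by positivity)
  have h5 : 0 ≤ φ t := nf_phi_nonneg h ht
  have h6 : 0 ≤ φ' (M0 * t) := nf_phi'_nonneg h (by positivity)
  have hcomb : (M0 * t) * (2 * φ' t) - (M0 * t) * φ' (M0 * t) ≤ Ks * (t * φ' t) := by
    nlinarith [mul_le_mul_of_nonneg_left h3 hKs.le, mul_nonneg hKs.le h5]
  have hG : 0 ≤ t * (M0 * φ' (M0 * t) - (2 * M0 - Ks) * φ' t) := by nlinarith [hcomb]
  have hG' : 0 ≤ M0 * φ' (M0 * t) - (2 * M0 - Ks) * φ' t :=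
    (mul_nonneg_iff_of_pos_left ht0).mp hG
  have hfin : M0 * ((3/2) * φ' t) ≤ M0 * φ' (M0 * t) := by nlinarith [hG', hp']
  exact le_of_mul_le_mul_left hfin hM0pos

lemma decay_iterate {f : ℝ → ℝ} {M0 : ℝ} (hM0 : 1 ≤ M0)
    (hgrow : ∀ t ≥ (0:ℝ), (3/2) * f t ≤ f (M0 * t)) :
    ∀ (k : ℕ) {t : ℝ}, 0 ≤ t → f t ≤ (2/3)^k * f (M0^k * t) := by
  intro k
  induction k with
  | zero => intro t ht; simp
  | succ k ih =>
    intro t ht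
    have h1 := ih ht
    have h2 := hgrow (M0^k * t) (by positivity)
    have h3 : f (M0^k * t) ≤ (2/3) * f (M0 * (M0^k * t)) := by linarith
    calc f t ≤ (2/3)^k * f (M0^k * t) := h1
      _ ≤ (2/3)^k * ((2/3) * f (M0 * (M0^k * t))) := by
          exact mul_le_mul_of_nonneg_left h3 (by positivity)
      _ = (2/3)^(k+1) * f (M0^(k+1) * t) := by ring_nf
  
lemma pointwise_decay {f : ℝ → ℝ} (hf : MonotoneOn f (Set.Ici 0))
    {M0 : ℝ} (hM0 : 2 ≤ M0)
    (hgrow : ∀ t ≥ (0:ℝ), (3/2) * f t ≤ f (M0 * t)) {u a : ℝ} (hu : 0 < u) (hua : u ≤ a)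
    (hfa : 0 ≤ f a) :
    f u ≤ (3/2) * (u/a) ^ (Real.log (3/2) / Real.log M0) * f a := by
  set δ := Real.log (3/2) / Real.log M0 with hδ
  have hM0pos : (0:ℝ) < M0 := by linarith
  have hM0gt1 : (1:ℝ) < M0 := by linarith
  have hlogM0 : 0 < Real.log M0 := Real.log_pos hM0gt1
  have ha : 0 < a := hu.trans_le hua
  set r := a / u with hr
  have hr1 : 1 ≤ r := (one_le_div hu).mpr hua
  have hrpos : 0 < r := lt_of_lt_of_le one_pos hr1
  set k := ⌊Real.logb M0 r⌋₊ with hk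
  have hkle : (k:ℝ) ≤ Real.logb M0 r := Nat.floor_le (Real.logb_nonneg hM0gt1 hr1)
  have hklt : Real.logb M0 r < (k:ℝ) + 1 := Nat.lt_floor_add_one _
  have hMk : (M0:ℝ)^k ≤ r := by
    calc (M0:ℝ)^k = M0 ^ ((k:ℕ):ℝ) := (Real.rpow_natCast M0 k).symm
      _ ≤ M0 ^ Real.logb M0 r := Real.rpow_le_rpow_of_exponent_le hM0gt1.le hkle
      _ = r := Real.rpow_logb hM0pos (by linarith) hrpos
  have hMku : M0^k * u ≤ a := by
    rw [hr] at hMk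
    calc M0^k * u ≤ (a/u) * u := by
          exact mul_le_mul_of_nonneg_right hMk hu.le
      _ = a := by field_simp
  have h1 : f u ≤ (2/3)^k * f (M0^k * u) := decay_iterate hM0gt1.le hgrow k hu.le
  have h2 : f (M0^k * u) ≤ f a := hf (by positivity : (0:ℝ) ≤ M0^k * u) (by linarith : (0:ℝ) ≤ a) hMku
  have h3 : f u ≤ (2/3)^k * f a := by
    calc f u ≤ (2/3)^k * f (M0^k * u) := h1
      _ ≤ (2/3)^k * f a := mul_le_mul_of_nonneg_left h2 (by positivity)
  -- now (2/3)^k ≤ (3/2) * (u/a)^δ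
  have hbound : ((2:ℝ)/3)^k ≤ (3/2) * (u/a) ^ δ := by
    have e0 : ((2:ℝ)/3)^k = ((2:ℝ)/3) ^ ((k:ℕ):ℝ) := (Real.rpow_natCast _ k).symm
    have e1 : ((2:ℝ)/3) ^ ((k:ℕ):ℝ) ≤ ((2:ℝ)/3) ^ (Real.logb M0 r - 1) :=
      Real.rpow_le_rpow_of_exponent_ge (by norm_num) (by norm_num) (by linarith)
    have e2 : ((2:ℝ)/3) ^ (Real.logb M0 r - 1) = (3/2) * ((2:ℝ)/3) ^ (Real.logb M0 r) := by
      rw [Real.rpow_sub (by norm_num), Real.rpow_one]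
      ring
    have e3 : ((2:ℝ)/3) ^ (Real.logb M0 r) = (u/a) ^ δ := by
      rw [Real.rpow_def_of_pos (by norm_num : (0:ℝ) < 2/3),
          Real.rpow_def_of_pos (by positivity : (0:ℝ) < u/a)]
      congr 1
      have l1 : Real.log ((2:ℝ)/3) = - Real.log (3/2) := by
        rw [show ((2:ℝ)/3) = ((3:ℝ)/2)⁻¹ by norm_num, Real.log_inv]
      have l2 : Real.log (u/a) = - Real.log r := by
        rw [hr, ← Real.log_inv]
        congr 1
        field_simp
      rw [l1, l2, Real.logb, hδ]
      ring
    calc ((2:ℝ)/3)^k = ((2:ℝ)/3) ^ ((k:ℕ):ℝ) := e0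
      _ ≤ ((2:ℝ)/3) ^ (Real.logb M0 r - 1) := e1
      _ = (3/2) * ((2:ℝ)/3) ^ (Real.logb M0 r) := e2
      _ = (3/2) * (u/a) ^ δ := by rw [e3]
  calc f u ≤ (2/3)^k * f a := h3
    _ ≤ (3/2) * (u/a) ^ δ * f a := mul_le_mul_of_nonneg_right hbound hfa

lemma phi'_quarter {K : ℝ} (h : IsNFunction φ φ') (hK2 : 2 ≤ K)
    (hΔ : ∀ t ≥ (0:ℝ), φ (2 * t) ≤ K * φ t) {s : ℝ} (hs : 0 < s) :
    φ' (4 * s) ≤ (K^3 / 4) * φ' s := by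
  have hK0 : (0:ℝ) ≤ K := by linarith
  have h8 : φ (8 * s) ≤ K^3 * φ s := by
    have a1 := hΔ (4 * s) (by positivity)
    have a2 := hΔ (2 * s) (by positivity)
    have a3 := hΔ s hs.le
    have e1 : (2:ℝ) * (4 * s) = 8 * s := by ring
    have e2 : (2:ℝ) * (2 * s) = 4 * s := by ring
    rw [e1] at a1
    rw [e2] at a2
    nlinarith [nf_phi_nonneg h hs.le, mul_le_mul_of_nonneg_left a2 hK0,
      mul_le_mul_of_nonneg_left a3 (mul_nonneg hK0 hK0)]
  have hb : (4 * s) * φ' (4 * s) ≤ φ (2 * (4 * s)) := nf_mul_le h (by positivity)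
  have hc : φ s ≤ s * φ' s := nf_le_mul h hs.le
  have e3 : (2:ℝ) * (4 * s) = 8 * s := by ring
  rw [e3] at hb
  have hchain : s * (4 * φ' (4 * s)) ≤ s * (K^3 * φ' s) := by
    nlinarith [mul_le_mul_of_nonneg_left hc (pow_nonneg hK0 3)]
  have := le_of_mul_le_mul_left hchain hs
  linarith

end Aux

set_option maxHeartbeats 1000000 in
theorem segment_integral_equiv (K Ks : ℝ) (hK : 0 < K) (hKs : 0 < Ks) :
    ∃ c C : ℝ, 0 < c ∧ 0 < C ∧
      ∀ (N n : ℕ) (φ φ' : ℝ → ℝ), IsNFunction φ φ' →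
        (∀ t ≥ (0:ℝ), φ (2 * t) ≤ K * φ t) →
        (∀ t ≥ (0:ℝ), conjFn φ (2 * t) ≤ Ks * conjFn φ t) →
        ∀ P₀ P₁ : EuclideanSpace ℝ (Fin N × Fin n), 0 < ‖P₀‖ + ‖P₁‖ →
          c * (φ' (‖P₀‖ + ‖P₁‖) / (‖P₀‖ + ‖P₁‖)) ≤
            (∫ θ in (0:ℝ)..1, φ' ‖(1 - θ) • P₀ + θ • P₁‖ / ‖(1 - θ) • P₀ + θ • P₁‖) ∧
          (∫ θ in (0:ℝ)..1, φ' ‖(1 - θ) • P₀ + θ • P₁‖ / ‖(1 - θ) • P₀ + θ • P₁‖) ≤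
            C * (φ' (‖P₀‖ + ‖P₁‖) / (‖P₀‖ + ‖P₁‖)) := by
  set M0 := 2 * Ks + 2 with hM0def
  have hM02 : (2:ℝ) ≤ M0 := by simp [hM0def]; linarith
  set δ := Real.log (3/2) / Real.log M0 with hδdef
  have hlog32 : 0 < Real.log (3/2) := Real.log_pos (by norm_num)
  have hlogM0 : 0 < Real.log M0 := Real.log_pos (by linarith)
  have hδpos : 0 < δ := div_pos hlog32 hlogM0
  have hδlt1 : δ < 1 := (div_lt_one hlogM0).mpr (Real.log_lt_log (by norm_num) (by linarith))
  have hδ1 : (-1:ℝ) < δ - 1 := by linarith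
  set K' := max K 2 with hK'def
  have hK'2 : (2:ℝ) ≤ K' := le_max_right _ _
  have hK'pos : (0:ℝ) < K' := by linarith
  refine ⟨(K'^3)⁻¹, 3 / δ, inv_pos.mpr (pow_pos hK'pos 3), div_pos (by norm_num) hδpos, ?_⟩
  intro N n φ φ' hNF hΔ hΔs P₀ P₁ hM
  set M := ‖P₀‖ + ‖P₁‖ with hMdef
  have hΔ' : ∀ t ≥ (0:ℝ), φ (2 * t) ≤ K' * φ t := fun t ht =>
    (hΔ t ht).trans (mul_le_mul_of_nonneg_right (le_max_left _ _) (nf_phi_nonneg hNF ht))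
  have hgrow : ∀ t ≥ (0:ℝ), (3/2) * φ' t ≤ φ' (M0 * t) := fun t ht =>
    phi'_growth hNF hKs hΔs ht
  set f := fun θ : ℝ => φ' ‖(1 - θ) • P₀ + θ • P₁‖ / ‖(1 - θ) • P₀ + θ • P₁‖ with hfdef
  set θ₀ := ‖P₀‖ / M with hθ₀def
  have hθ₀0 : 0 ≤ θ₀ := div_nonneg (norm_nonneg _) hM.le
  have hθ₀1 : θ₀ ≤ 1 := (div_le_one hM).mpr (le_add_of_nonneg_right (norm_nonneg _))
  -- norm bounds along the segment
  have hsm1 : ∀ θ : ℝ, θ ≤ 1 → ‖(1 - θ) • P₀‖ = (1 - θ) * ‖P₀‖ := by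
    intro θ hθ
    rw [norm_smul, Real.norm_eq_abs, abs_of_nonneg (by linarith)]
  have hsm2 : ∀ θ : ℝ, 0 ≤ θ → ‖θ • P₁‖ = θ * ‖P₁‖ := by
    intro θ hθ
    rw [norm_smul, Real.norm_eq_abs, abs_of_nonneg hθ]
  have hub : ∀ θ ∈ Set.Icc (0:ℝ) 1, ‖(1 - θ) • P₀ + θ • P₁‖ ≤ M := by
    intro θ hθ
    calc ‖(1 - θ) • P₀ + θ • P₁‖ ≤ ‖(1 - θ) • P₀‖ + ‖θ • P₁‖ := norm_add_le _ _
      _ = (1 - θ) * ‖P₀‖ + θ * ‖P₁‖ := by rw [hsm1 θ hθ.2, hsm2 θ hθ.1]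
      _ ≤ M := by nlinarith [norm_nonneg P₀, norm_nonneg P₁, hθ.1, hθ.2]
  have hlb : ∀ θ ∈ Set.Icc (0:ℝ) 1, M * |θ - θ₀| ≤ ‖(1 - θ) • P₀ + θ • P₁‖ := by
    intro θ hθ
    have s1 : θ * ‖P₁‖ - (1 - θ) * ‖P₀‖ ≤ ‖(1 - θ) • P₀ + θ • P₁‖ := by
      have h := norm_sub_norm_le (θ • P₁) (-((1 - θ) • P₀))
      rw [norm_neg, sub_neg_eq_add, hsm1 θ hθ.2, hsm2 θ hθ.1, add_comm (θ • P₁)] at h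
      exact h
    have s2 : (1 - θ) * ‖P₀‖ - θ * ‖P₁‖ ≤ ‖(1 - θ) • P₀ + θ • P₁‖ := by
      have h := norm_sub_norm_le ((1 - θ) • P₀) (-(θ • P₁))
      rw [norm_neg, sub_neg_eq_add, hsm1 θ hθ.2, hsm2 θ hθ.1] at h
      exact h
    have key : |θ * ‖P₁‖ - (1 - θ) * ‖P₀‖| ≤ ‖(1 - θ) • P₀ + θ • P₁‖ :=
      abs_le.mpr ⟨by linarith, s1⟩
    have heq : M * |θ - θ₀| = |θ * ‖P₁‖ - (1 - θ) * ‖P₀‖| := by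
      rw [← abs_of_pos hM, ← abs_mul]
      congr 1
      have hM0' : M ≠ 0 := hM.ne'
      have hMc : M * (‖P₀‖ / M) = ‖P₀‖ := by field_simp
      rw [hθ₀def, mul_sub, hMc, hMdef]
      ring
    linarith
  -- measurability and nonnegativity
  have hcont : Continuous (fun θ : ℝ => ‖(1 - θ) • P₀ + θ • P₁‖) := by fun_prop
  have hψmono : Monotone (fun t : ℝ => φ' (max t 0)) := fun x y hxy =>
    hNF.2.2.1 (le_max_right x 0) (le_max_right y 0) (max_le_max hxy le_rfl)
  have hfmeas : Measurable f := by
    have hfeq : f = fun θ => (fun t : ℝ => φ' (max t 0)) ‖(1 - θ) • P₀ + θ • P₁‖ /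
        ‖(1 - θ) • P₀ + θ • P₁‖ := by
      funext θ
      simp only [hfdef, max_eq_left (norm_nonneg _)]
    rw [hfeq]
    exact (hψmono.measurable.comp hcont.measurable).div hcont.measurable
  have hf0 : ∀ θ, 0 ≤ f θ := fun θ =>
    div_nonneg (nf_phi'_nonneg hNF (norm_nonneg _)) (norm_nonneg _)
  have hφ'M : 0 ≤ φ' M := nf_phi'_nonneg hNF hM.le
  set B := (3/2) * (φ' M / M) with hBdef
  have hBnn : 0 ≤ B := by positivity
  -- key pointwise upper bound
  have hkey : ∀ θ ∈ Set.Icc (0:ℝ) 1, θ ≠ θ₀ → f θ ≤ B * |θ - θ₀| ^ (δ - 1) := by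
    intro θ hθ hne
    set u := ‖(1 - θ) • P₀ + θ • P₁‖ with hu
    have habs : 0 < |θ - θ₀| := abs_pos.mpr (sub_ne_zero.mpr hne)
    have hul : M * |θ - θ₀| ≤ u := hlb θ hθ
    have hupos : 0 < u := lt_of_lt_of_le (mul_pos hM habs) hul
    have huM : u ≤ M := hub θ hθ
    have hdec : φ' u ≤ (3/2) * (u/M) ^ δ * φ' M :=
      pointwise_decay hNF.2.2.1 hM02 hgrow hupos huM hφ'M
    have huMpos : 0 < u / M := div_pos hupos hM
    have e4 : (u/M) ^ δ = (u/M) ^ (δ - 1) * (u/M) := by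
      conv_lhs => rw [show δ = (δ - 1) + 1 by ring, Real.rpow_add huMpos, Real.rpow_one]
    have e5 : ((3/2) * (u/M) ^ δ * φ' M) / u = (3/2) * (u/M) ^ (δ - 1) * φ' M / M := by
      rw [e4]
      field_simp
    have e6 : (u/M) ^ (δ - 1) ≤ |θ - θ₀| ^ (δ - 1) := by
      apply Real.rpow_le_rpow_of_nonpos habs _ (by linarith)
      rw [le_div_iff₀ hM]
      linarith [hul]
    show φ' u / u ≤ B * |θ - θ₀| ^ (δ - 1)
    calc φ' u / u ≤ ((3/2) * (u/M) ^ δ * φ' M) / u := by gcongr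
      _ = (3/2) * (u/M) ^ (δ - 1) * φ' M / M := e5
      _ ≤ (3/2) * |θ - θ₀| ^ (δ - 1) * φ' M / M := by gcongr
      _ = B * |θ - θ₀| ^ (δ - 1) := by rw [hBdef]; ring
  -- integrability
  have hIplus : IntervalIntegrable (fun x : ℝ => (x - θ₀) ^ (δ - 1)) volume θ₀ 1 := by
    have := (intervalIntegral.intervalIntegrable_rpow' (a := 0) (b := 1 - θ₀) hδ1).comp_sub_right θ₀
    simpa using this
  have hIminus : IntervalIntegrable (fun x : ℝ => (θ₀ - x) ^ (δ - 1)) volume 0 θ₀ := by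
    have := (intervalIntegral.intervalIntegrable_rpow' (a := θ₀) (b := 0) hδ1).comp_sub_left θ₀
    simpa using this
  have hgplus : IntervalIntegrable (fun θ : ℝ => B * (θ - θ₀) ^ (δ - 1)) volume θ₀ 1 :=
    hIplus.const_mul B
  have hgminus : IntervalIntegrable (fun θ : ℝ => B * (θ₀ - θ) ^ (δ - 1)) volume 0 θ₀ :=
    hIminus.const_mul B
  have hne_ae : ∀ᵐ θ : ℝ, θ ≠ θ₀ := by
    rw [ae_iff]
    have hset : {a : ℝ | ¬ a ≠ θ₀} = {θ₀} := by ext x; simp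
    rw [hset]
    exact measure_singleton θ₀
  have hfplus : IntervalIntegrable f volume θ₀ 1 := by
    rw [intervalIntegrable_iff_integrableOn_Ioc_of_le hθ₀1]
    apply Integrable.mono' ((intervalIntegrable_iff_integrableOn_Ioc_of_le hθ₀1).mp hgplus)
      (hfmeas.aestronglyMeasurable)
    filter_upwards [ae_restrict_mem measurableSet_Ioc] with θ hθmem
    have hθI : θ ∈ Set.Icc (0:ℝ) 1 := ⟨hθ₀0.trans hθmem.1.le, hθmem.2⟩
    have hne : θ ≠ θ₀ := ne_of_gt hθmem.1
    rw [Real.norm_eq_abs, abs_of_nonneg (hf0 θ)]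
    calc f θ ≤ B * |θ - θ₀| ^ (δ - 1) := hkey θ hθI hne
      _ = B * (θ - θ₀) ^ (δ - 1) := by rw [abs_of_pos (sub_pos.mpr hθmem.1)]
  have hfminus : IntervalIntegrable f volume 0 θ₀ := by
    rw [intervalIntegrable_iff_integrableOn_Ioc_of_le hθ₀0]
    apply Integrable.mono' ((intervalIntegrable_iff_integrableOn_Ioc_of_le hθ₀0).mp hgminus)
      (hfmeas.aestronglyMeasurable)
    filter_upwards [ae_restrict_mem measurableSet_Ioc, ae_restrict_of_ae hne_ae] with θ hθmem hne
    have hθI : θ ∈ Set.Icc (0:ℝ) 1 := ⟨hθmem.1.le, hθmem.2.trans hθ₀1⟩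
    have hlt : θ < θ₀ := lt_of_le_of_ne hθmem.2 hne
    rw [Real.norm_eq_abs, abs_of_nonneg (hf0 θ)]
    calc f θ ≤ B * |θ - θ₀| ^ (δ - 1) := hkey θ hθI hne
      _ = B * (θ₀ - θ) ^ (δ - 1) := by rw [abs_of_neg (sub_neg.mpr hlt), neg_sub]
  have hIf : IntervalIntegrable f volume 0 1 := hfminus.trans hfplus
  constructor
  · -- lower bound
    have hq : φ' M ≤ (K'^3 / 4) * φ' (M/4) := by
      have := phi'_quarter hNF hK'2 hΔ' (show (0:ℝ) < M/4 by linarith)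
      rw [show (4:ℝ) * (M/4) = M by ring] at this
      exact this
    have hstep : (K'^3)⁻¹ * (φ' M / M) ≤ (1/4) * (φ' (M/4) / M) := by
      have hK3 : (0:ℝ) < K'^3 := pow_pos hK'pos 3
      rw [show (K'^3)⁻¹ * (φ' M / M) = ((K'^3)⁻¹ * φ' M) / M by ring,
          show (1/4 : ℝ) * (φ' (M/4) / M) = ((1/4) * φ' (M/4)) / M by ring]
      apply div_le_div_of_nonneg_right ?_ hM.le
      have hK3' : (K'^3 : ℝ) ≠ 0 := hK3.ne'
      calc (K'^3)⁻¹ * φ' M ≤ (K'^3)⁻¹ * ((K'^3 / 4) * φ' (M/4)) :=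
            mul_le_mul_of_nonneg_left hq (inv_nonneg.mpr hK3.le)
        _ = 1/4 * φ' (M/4) := by field_simp
    rcases le_or_gt θ₀ (1/2) with hhalf | hhalf
    · -- use [3/4, 1]
      have hlow : ∀ θ ∈ Set.Icc (3/4:ℝ) 1, φ' (M/4) / M ≤ f θ := by
        intro θ hθ
        have hθI : θ ∈ Set.Icc (0:ℝ) 1 := ⟨by linarith [hθ.1], hθ.2⟩
        have hu4 : M/4 ≤ ‖(1 - θ) • P₀ + θ • P₁‖ := by
          have h := hlb θ hθI
          have habs : (1/4:ℝ) ≤ |θ - θ₀| := by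
            rw [abs_of_nonneg (by linarith [hθ.1])]
            linarith [hθ.1]
          calc M/4 = M * (1/4) := by ring
            _ ≤ M * |θ - θ₀| := mul_le_mul_of_nonneg_left habs hM.le
            _ ≤ _ := h
        have hupos : (0:ℝ) < ‖(1 - θ) • P₀ + θ • P₁‖ := lt_of_lt_of_le (by linarith : (0:ℝ) < M/4) hu4
        have huM := hub θ hθI
        show φ' (M/4) / M ≤ φ' ‖(1 - θ) • P₀ + θ • P₁‖ / ‖(1 - θ) • P₀ + θ • P₁‖
        exact div_le_div₀ (nf_phi'_nonneg hNF hupos.le)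
          (hNF.2.2.1 (Set.mem_Ici.mpr (by linarith : (0:ℝ) ≤ M/4)) (Set.mem_Ici.mpr hupos.le) hu4)
          hupos huM
      have hfsub : IntervalIntegrable f volume (3/4) 1 := hIf.mono_set (by
        rw [Set.uIcc_of_le (by norm_num : (3/4:ℝ) ≤ 1), Set.uIcc_of_le (by norm_num : (0:ℝ) ≤ 1)]
        exact Set.Icc_subset_Icc (by norm_num) le_rfl)
      have h1 := intervalIntegral.integral_mono_on (by norm_num : (3/4:ℝ) ≤ 1)
        intervalIntegrable_const hfsub hlow
      rw [intervalIntegral.integral_const] at h1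
      have h2 : ∫ θ in (3/4:ℝ)..1, f θ ≤ ∫ θ in (0:ℝ)..1, f θ :=
        intervalIntegral.integral_mono_interval (by norm_num) (by norm_num) le_rfl
          (Filter.Eventually.of_forall hf0) hIf
      calc (K'^3)⁻¹ * (φ' M / M) ≤ 1/4 * (φ' (M/4) / M) := hstep
        _ = (1 - 3/4 : ℝ) • (φ' (M/4) / M) := by rw [smul_eq_mul]; norm_num
        _ ≤ ∫ θ in (3/4:ℝ)..1, f θ := h1
        _ ≤ ∫ θ in (0:ℝ)..1, f θ := h2
    · -- use [0, 1/4]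
      have hlow : ∀ θ ∈ Set.Icc (0:ℝ) (1/4), φ' (M/4) / M ≤ f θ := by
        intro θ hθ
        have hθI : θ ∈ Set.Icc (0:ℝ) 1 := ⟨hθ.1, by linarith [hθ.2]⟩
        have hu4 : M/4 ≤ ‖(1 - θ) • P₀ + θ • P₁‖ := by
          have h := hlb θ hθI
          have habs : (1/4:ℝ) ≤ |θ - θ₀| := by
            rw [abs_of_nonpos (by linarith [hθ.2]), neg_sub]
            linarith [hθ.2]
          calc M/4 = M * (1/4) := by ring
            _ ≤ M * |θ - θ₀| := mul_le_mul_of_nonneg_left habs hM.le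
            _ ≤ _ := h
        have hupos : (0:ℝ) < ‖(1 - θ) • P₀ + θ • P₁‖ := lt_of_lt_of_le (by linarith : (0:ℝ) < M/4) hu4
        have huM := hub θ hθI
        show φ' (M/4) / M ≤ φ' ‖(1 - θ) • P₀ + θ • P₁‖ / ‖(1 - θ) • P₀ + θ • P₁‖
        exact div_le_div₀ (nf_phi'_nonneg hNF hupos.le)
          (hNF.2.2.1 (Set.mem_Ici.mpr (by linarith : (0:ℝ) ≤ M/4)) (Set.mem_Ici.mpr hupos.le) hu4)
          hupos huM
      have hfsub : IntervalIntegrable f volume 0 (1/4) := hIf.mono_set (by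
        rw [Set.uIcc_of_le (by norm_num : (0:ℝ) ≤ 1/4), Set.uIcc_of_le (by norm_num : (0:ℝ) ≤ 1)]
        exact Set.Icc_subset_Icc le_rfl (by norm_num))
      have h1 := intervalIntegral.integral_mono_on (by norm_num : (0:ℝ) ≤ 1/4)
        intervalIntegrable_const hfsub hlow
      rw [intervalIntegral.integral_const] at h1
      have h2 : ∫ θ in (0:ℝ)..(1/4), f θ ≤ ∫ θ in (0:ℝ)..1, f θ :=
        intervalIntegral.integral_mono_interval le_rfl (by norm_num) (by norm_num)
          (Filter.Eventually.of_forall hf0) hIf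
      calc (K'^3)⁻¹ * (φ' M / M) ≤ 1/4 * (φ' (M/4) / M) := hstep
        _ = (1/4 - 0 : ℝ) • (φ' (M/4) / M) := by rw [smul_eq_mul]; norm_num
        _ ≤ ∫ θ in (0:ℝ)..(1/4), f θ := h1
        _ ≤ ∫ θ in (0:ℝ)..1, f θ := h2
  · -- upper bound
    have hsplit : ∫ θ in (0:ℝ)..1, f θ = (∫ θ in (0:ℝ)..θ₀, f θ) + ∫ θ in θ₀..1, f θ :=
      (intervalIntegral.integral_add_adjacent_intervals hfminus hfplus).symm
    have hup1 : ∫ θ in θ₀..1, f θ ≤ B * (1/δ) := by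
      have hbound : f ≤ᵐ[volume.restrict (Set.Icc θ₀ 1)]
          fun θ => B * (θ - θ₀) ^ (δ - 1) := by
        filter_upwards [ae_restrict_mem measurableSet_Icc, ae_restrict_of_ae hne_ae]
          with θ hθmem hne
        have hθI : θ ∈ Set.Icc (0:ℝ) 1 := ⟨hθ₀0.trans hθmem.1, hθmem.2⟩
        have hgt : θ₀ < θ := lt_of_le_of_ne hθmem.1 (Ne.symm hne)
        calc f θ ≤ B * |θ - θ₀| ^ (δ - 1) := hkey θ hθI hne
          _ = B * (θ - θ₀) ^ (δ - 1) := by rw [abs_of_pos (sub_pos.mpr hgt)]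
      have hmono := intervalIntegral.integral_mono_ae_restrict hθ₀1 hfplus hgplus hbound
      have hval : ∫ θ in θ₀..1, B * (θ - θ₀) ^ (δ - 1) = B * ((1 - θ₀) ^ δ / δ) := by
        rw [intervalIntegral.integral_const_mul]
        congr 1
        have h1 : ∫ θ in θ₀..1, (θ - θ₀) ^ (δ - 1)
            = ∫ x in (θ₀ - θ₀)..(1 - θ₀), x ^ (δ - 1) :=
          intervalIntegral.integral_comp_sub_right (fun x => x ^ (δ - 1)) θ₀
        rw [h1, sub_self, integral_rpow (Or.inl hδ1)]
        simp only [sub_add_cancel]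
        rw [Real.zero_rpow hδpos.ne']
        ring
      have hle1 : B * ((1 - θ₀) ^ δ / δ) ≤ B * (1/δ) := by
        apply mul_le_mul_of_nonneg_left _ hBnn
        apply div_le_div_of_nonneg_right _ hδpos.le
        exact Real.rpow_le_one (by linarith) (by linarith) hδpos.le
      linarith [hmono, hval ▸ hmono]
    have hup2 : ∫ θ in (0:ℝ)..θ₀, f θ ≤ B * (1/δ) := by
      have hbound : f ≤ᵐ[volume.restrict (Set.Icc (0:ℝ) θ₀)]
          fun θ => B * (θ₀ - θ) ^ (δ - 1) := by
        filter_upwards [ae_restrict_mem measurableSet_Icc, ae_restrict_of_ae hne_ae]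
          with θ hθmem hne
        have hθI : θ ∈ Set.Icc (0:ℝ) 1 := ⟨hθmem.1, hθmem.2.trans hθ₀1⟩
        have hlt : θ < θ₀ := lt_of_le_of_ne hθmem.2 hne
        calc f θ ≤ B * |θ - θ₀| ^ (δ - 1) := hkey θ hθI hne
          _ = B * (θ₀ - θ) ^ (δ - 1) := by rw [abs_of_neg (sub_neg.mpr hlt), neg_sub]
      have hmono := intervalIntegral.integral_mono_ae_restrict hθ₀0 hfminus hgminus hbound
      have hval : ∫ θ in (0:ℝ)..θ₀, B * (θ₀ - θ) ^ (δ - 1) = B * (θ₀ ^ δ / δ) := by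
        rw [intervalIntegral.integral_const_mul]
        congr 1
        have h1 : ∫ θ in (0:ℝ)..θ₀, (θ₀ - θ) ^ (δ - 1)
            = ∫ x in (θ₀ - θ₀)..(θ₀ - 0), x ^ (δ - 1) :=
          intervalIntegral.integral_comp_sub_left (fun x => x ^ (δ - 1)) θ₀
        rw [h1, sub_self, sub_zero, integral_rpow (Or.inl hδ1)]
        simp only [sub_add_cancel]
        rw [Real.zero_rpow hδpos.ne']
        ring
      have hle1 : B * (θ₀ ^ δ / δ) ≤ B * (1/δ) := by
        apply mul_le_mul_of_nonneg_left _ hBnn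
        apply div_le_div_of_nonneg_right _ hδpos.le
        exact Real.rpow_le_one hθ₀0 hθ₀1 hδpos.le
      linarith [hval ▸ hmono]
    rw [hsplit]
    have hBeq : B * (1/δ) + B * (1/δ) = 3 / δ * (φ' M / M) := by
      rw [hBdef]
      ring
    linarith
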